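/- For every natural number n, Σ_{λ ∈ P(n)} (ℓ(λ^o) + ℓ(λ^e) − ℓ(λ^r)) = Σ_{λ ∈ P(n)} (ℓ((λ^r)~) − ℓ(λ^r) + ℓ(λ^e)), equivalently Σ_{λ ∈ P(n)} ℓ(λ^o) = Σ_{λ ∈ P(n)} ℓ((λ^r)~); both sides equal Σ_{λ ∈ P(n)} 2·ℓ(λ^d). The sums run over all partitions λ of n and (λ^r)~ denotes the 2-Glaisher image of λ^r. -/

import Mathlib

/-- `s` is (the multiset of parts of) a partition of `n`: all parts are positive and sum to `n`. -/
def IsPartitionOf (n : ℕ) (s : Multiset ℕ) : Prop :=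
  (∀ x ∈ s, 0 < x) ∧ s.sum = n

/-- `λ^r`: the part `i` occurs once if its multiplicity in `s` is odd, and not at all otherwise. -/
def rPart (s : Multiset ℕ) : Multiset ℕ :=
  s.dedup.filter (fun i => Odd (s.count i))

/-- `λ^d`: the part `i` occurs `⌊m_i(λ)/2⌋` times (i.e. `(m_i-1)/2` if `m_i` odd, `m_i/2` if even). -/
def dPart (s : Multiset ℕ) : Multiset ℕ :=
  ∑ i ∈ s.toFinset, Multiset.replicate (s.count i / 2) i

/-- `λ^o`: the odd parts of `λ`. -/
def oPart (s : Multiset ℕ) : Multiset ℕ :=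
  s.filter (fun x => Odd x)

/-- `λ^e`: the halves of the even parts of `λ`. -/
def ePart (s : Multiset ℕ) : Multiset ℕ :=
  (s.filter (fun x => Even x)).map (fun x => x / 2)

/-- The `p`-Glaisher map: each part `x = p^a * q` (with `p ∤ q`) is replaced by `p^a` copies of `q`. -/
def glaisher (p : ℕ) (s : Multiset ℕ) : Multiset ℕ :=
  s.bind (fun x => Multiset.replicate (p ^ (Nat.factorization x p)) (x / p ^ (Nat.factorization x p)))

/-- `λ^{r(p)}`: the part `i` occurs `m_i(λ) mod p` times. -/
def rPartP (p : ℕ) (s : Multiset ℕ) : Multiset ℕ :=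
  ∑ i ∈ s.toFinset, Multiset.replicate (s.count i % p) i

/-- `λ^{d(p)}`: the part `i` occurs `(m_i(λ) - (m_i(λ) mod p))/p` times. -/
def dPartP (p : ℕ) (s : Multiset ℕ) : Multiset ℕ :=
  ∑ i ∈ s.toFinset, Multiset.replicate (s.count i / p) i



lemma count_rPart (s : Multiset ℕ) (i : ℕ) : (rPart s).count i = s.count i % 2 := by
  rw [rPart, Multiset.count_filter]
  by_cases h : Odd (s.count i)
  · have hi : i ∈ s := by
      rw [← Multiset.count_pos]; rcases Nat.eq_zero_or_pos (s.count i) with h0 | h0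
      · simp [h0] at h
      · exact h0
    simp [h, Multiset.count_dedup, hi, Nat.odd_iff.mp h]
  · have : s.count i % 2 = 0 := Nat.even_iff.mp (Nat.not_odd_iff_even.mp h)
    simp [h, this]

lemma count_dPart (s : Multiset ℕ) (i : ℕ) : (dPart s).count i = s.count i / 2 := by
  rw [dPart, Multiset.count_sum']
  by_cases hi : i ∈ s.toFinset
  · rw [Finset.sum_eq_single i (fun j _ hj => by
      rw [Multiset.count_replicate]; simp [hj]) (fun h => absurd hi h)]
    simp [Multiset.count_replicate]
  · have h0 : s.count i = 0 := by
      simpa [Multiset.count_eq_zero] using (fun h => hi (Multiset.mem_toFinset.mpr h))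
    rw [h0]
    refine Finset.sum_eq_zero fun j hj => ?_
    rw [Multiset.count_replicate]
    split
    · next h => exact absurd (h ▸ hi) (fun hh => hh hj)
    · rfl

lemma decomp (s : Multiset ℕ) : s = rPart s + (dPart s + dPart s) := by
  ext i
  simp [count_rPart, count_dPart]
  omega


lemma glaisher_sum (s : Multiset ℕ) : (glaisher 2 s).sum = s.sum := by
  rw [glaisher, Multiset.sum_bind]
  have : ∀ x : ℕ, (Multiset.replicate (2 ^ (Nat.factorization x 2)) (x / 2 ^ (Nat.factorization x 2))).sum = x := by
    intro x
    rw [Multiset.sum_replicate, smul_eq_mul]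
    rcases Nat.eq_zero_or_pos x with rfl | hx
    · simp
    · exact Nat.mul_div_cancel' (Nat.ordProj_dvd x 2)
  simp only [this, Multiset.map_id']

lemma sum_map_ite (p : ℕ → Prop) [DecidablePred p] (g : ℕ → ℕ) (s : Multiset ℕ) :
    (s.map (fun x => if p x then g x else 0)).sum = ((s.filter p).map g).sum := by
  induction s using Multiset.induction with
  | empty => simp
  | cons a t ih =>
    by_cases h : p a <;> simp [Multiset.filter_cons, h, ih]

lemma count_glaisher (s : Multiset ℕ) (q : ℕ) :
    (glaisher 2 s).count q =
      ((s.filter (fun x => x / 2 ^ (Nat.factorization x 2) = q)).map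
        (fun x => 2 ^ (Nat.factorization x 2))).sum := by
  rw [glaisher, Multiset.count_bind,
    ← sum_map_ite (fun x => x / 2 ^ (Nat.factorization x 2) = q)
      (fun x => 2 ^ (Nat.factorization x 2)) s]
  refine congrArg Multiset.sum (Multiset.map_congr rfl fun x _ => ?_)
  rw [Multiset.count_replicate]

lemma powsum_inj {E F : Multiset ℕ} (hE : E.Nodup) (hF : F.Nodup)
    (h : (E.map (fun p => 2 ^ p)).sum = (F.map (fun p => 2 ^ p)).sum) : E = F := by
  have key : ∀ (G : Multiset ℕ), G.Nodup →
      ((G.map (fun p => 2 ^ p)).sum).bitIndices = G.sort (· ≤ ·) := by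
    intro G hG
    have hs : (G.sort (· ≤ ·)).Pairwise (· < ·) :=
      ((Multiset.pairwise_sort G _).and (by
        have : ((G.sort (· ≤ ·) : List ℕ) : Multiset ℕ).Nodup := by
          rw [Multiset.sort_eq]; exact hG
        exact Multiset.coe_nodup.mp this)).imp (fun h => lt_of_le_of_ne h.1 h.2)
    have := Nat.bitIndices_twoPowsum hs.sortedLT
    rw [← this]
    congr 1
    conv_lhs => rw [← Multiset.sort_eq G (· ≤ ·)]
    rw [Multiset.map_coe, Multiset.sum_coe]
  have h1 := key E hE
  have h2 := key F hF
  rw [h] at h1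
  have : E.sort (· ≤ ·) = F.sort (· ≤ ·) := h1.symm.trans h2
  have := congrArg (fun l : List ℕ => (l : Multiset ℕ)) this
  simpa [Multiset.sort_eq] using this

lemma oc_recover (x : ℕ) : 2 ^ (x.factorization 2) * (x / 2 ^ (x.factorization 2)) = x := by
  rcases eq_or_ne x 0 with rfl | hx
  · simp
  · exact Nat.ordProj_mul_ordCompl_eq_self x 2

lemma glaisher_inj {μ ν : Multiset ℕ} (hμ : μ.Nodup) (hν : ν.Nodup)
    (h : glaisher 2 μ = glaisher 2 ν) : μ = ν := by
  have key : ∀ q : ℕ, μ.filter (fun x => x / 2 ^ (Nat.factorization x 2) = q)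
      = ν.filter (fun x => x / 2 ^ (Nat.factorization x 2) = q) := by
    intro q
    set P : ℕ → Prop := fun x => x / 2 ^ (Nat.factorization x 2) = q with hP
    have hinj : ∀ (G : Multiset ℕ), G.Nodup →
        ((G.filter P).map (fun x => Nat.factorization x 2)).Nodup := by
      intro G hG
      refine (hG.filter P).map_on ?_
      intro x hx y hy hxy
      have hx' : P x := Multiset.of_mem_filter hx
      have hy' : P y := Multiset.of_mem_filter hy
      have : 2 ^ (Nat.factorization x 2) * q = 2 ^ (Nat.factorization y 2) * q := by
        rw [hxy]
      calc x = 2 ^ (Nat.factorization x 2) * (x / 2 ^ (Nat.factorization x 2)) :=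
              (oc_recover x).symm
        _ = 2 ^ (Nat.factorization y 2) * (y / 2 ^ (Nat.factorization y 2)) := by
              rw [hx', hy', hxy]
        _ = y := oc_recover y
    have hc : (glaisher 2 μ).count q = (glaisher 2 ν).count q := by rw [h]
    rw [count_glaisher, count_glaisher] at hc
    have hμ2 : ((μ.filter P).map (fun x => Nat.factorization x 2)).map (fun p => 2 ^ p)
        = (μ.filter P).map (fun x => 2 ^ (Nat.factorization x 2)) := by
      rw [Multiset.map_map]; rfl
    have hν2 : ((ν.filter P).map (fun x => Nat.factorization x 2)).map (fun p => 2 ^ p)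
        = (ν.filter P).map (fun x => 2 ^ (Nat.factorization x 2)) := by
      rw [Multiset.map_map]; rfl
    have hE : (μ.filter P).map (fun x => Nat.factorization x 2)
        = (ν.filter P).map (fun x => Nat.factorization x 2) :=
      powsum_inj (hinj μ hμ) (hinj ν hν) (by rw [hμ2, hν2]; exact hc)
    have recov : ∀ (G : Multiset ℕ),
        ((G.filter P).map (fun x => Nat.factorization x 2)).map (fun p => 2 ^ p * q)
          = G.filter P := by
      intro G
      rw [Multiset.map_map]
      have : ∀ x ∈ G.filter P, ((fun p => 2 ^ p * q) ∘ (fun x => Nat.factorization x 2)) x = x := by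
        intro x hx
        have hx' : P x := Multiset.of_mem_filter hx
        simp only [Function.comp_apply]
        rw [← hx']
        exact oc_recover x
      rw [Multiset.map_congr rfl this, Multiset.map_id']
    rw [← recov μ, ← recov ν, hE]
  ext x
  have h1 : μ.count x = (μ.filter (fun y => y / 2 ^ (Nat.factorization y 2)
      = x / 2 ^ (Nat.factorization x 2))).count x := by
    rw [Multiset.count_filter, if_pos rfl]
  have h2 : ν.count x = (ν.filter (fun y => y / 2 ^ (Nat.factorization y 2)
      = x / 2 ^ (Nat.factorization x 2))).count x := by
    rw [Multiset.count_filter, if_pos rfl]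
  rw [h1, h2, key]

lemma rPart_nodup (s : Multiset ℕ) : (rPart s).Nodup :=
  (Multiset.nodup_dedup s).filter _

lemma mem_rPart {s : Multiset ℕ} {x : ℕ} (h : x ∈ rPart s) : x ∈ s :=
  Multiset.mem_dedup.mp (Multiset.mem_of_mem_filter h)

lemma mem_dPart {s : Multiset ℕ} {x : ℕ} (h : x ∈ dPart s) : x ∈ s := by
  rw [← Multiset.count_pos] at h ⊢
  rw [count_dPart] at h
  omega

lemma glaisher_mem {t : Multiset ℕ} {y : ℕ} (hy : y ∈ glaisher 2 t)
    (hpos : ∀ x ∈ t, 0 < x) : Odd y ∧ 0 < y := by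
  rw [glaisher, Multiset.mem_bind] at hy
  obtain ⟨x, hx, hyx⟩ := hy
  rw [Multiset.eq_of_mem_replicate hyx]
  have hx0 : x ≠ 0 := (hpos x hx).ne'
  constructor
  · rw [Nat.odd_iff]
    have h2 := Nat.not_dvd_ordCompl Nat.prime_two hx0
    omega
  · exact Nat.ordCompl_pos 2 hx0

/-- The bijection on partitions: `λ ↦ glaisher(λ^r) + 2·λ^d`. -/
def Phi (s : Multiset ℕ) : Multiset ℕ :=
  glaisher 2 (rPart s) + (dPart s).map (fun x => 2 * x)

lemma oPart_Phi {s : Multiset ℕ} (hpos : ∀ x ∈ s, 0 < x) :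
    oPart (Phi s) = glaisher 2 (rPart s) := by
  rw [Phi, oPart, Multiset.filter_add]
  have h1 : (glaisher 2 (rPart s)).filter (fun x => Odd x) = glaisher 2 (rPart s) :=
    Multiset.filter_eq_self.mpr (fun y hy =>
      (glaisher_mem hy (fun x hx => hpos x (mem_rPart hx))).1)
  have h2 : ((dPart s).map (fun x => 2 * x)).filter (fun x => Odd x) = 0 := by
    rw [Multiset.filter_eq_nil]
    intro a ha
    obtain ⟨x, _, rfl⟩ := Multiset.mem_map.mp ha
    simp [Nat.not_odd_iff_even, even_two_mul]
  rw [h1, h2, add_zero]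

lemma ePart_Phi {s : Multiset ℕ} (hpos : ∀ x ∈ s, 0 < x) :
    ePart (Phi s) = dPart s := by
  rw [Phi, ePart, Multiset.filter_add]
  have h1 : (glaisher 2 (rPart s)).filter (fun x => Even x) = 0 := by
    rw [Multiset.filter_eq_nil]
    intro a ha
    have := (glaisher_mem ha (fun x hx => hpos x (mem_rPart hx))).1
    rw [← Nat.not_even_iff_odd] at this
    exact this
  have h2 : ((dPart s).map (fun x => 2 * x)).filter (fun x => Even x)
      = (dPart s).map (fun x => 2 * x) :=
    Multiset.filter_eq_self.mpr (fun a ha => by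
      obtain ⟨x, _, rfl⟩ := Multiset.mem_map.mp ha
      exact even_two_mul x)
  rw [h1, h2, zero_add, Multiset.map_map]
  have : ∀ x ∈ dPart s, ((fun x => x / 2) ∘ (fun x => 2 * x)) x = x := by
    intro x _
    simp [Nat.mul_div_cancel_left]
  rw [Multiset.map_congr rfl this, Multiset.map_id']

lemma sum_Phi (s : Multiset ℕ) : (Phi s).sum = s.sum := by
  rw [Phi, Multiset.sum_add, glaisher_sum]
  have h2 : ((dPart s).map (fun x => 2 * x)).sum = (dPart s).sum + (dPart s).sum := by
    have := Multiset.sum_map_mul_left (s := dPart s) (a := 2) (f := fun x => x)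
    simp only [Multiset.map_id'] at this
    rw [this, two_mul]
  rw [h2]
  conv_rhs => rw [decomp s]
  rw [Multiset.sum_add, Multiset.sum_add]

lemma pos_Phi {s : Multiset ℕ} (hpos : ∀ x ∈ s, 0 < x) :
    ∀ y ∈ Phi s, 0 < y := by
  intro y hy
  rw [Phi, Multiset.mem_add] at hy
  rcases hy with hy | hy
  · exact (glaisher_mem hy (fun x hx => hpos x (mem_rPart hx))).2
  · obtain ⟨x, hx, rfl⟩ := Multiset.mem_map.mp hy
    have := hpos x (mem_dPart hx)
    omega

lemma Phi_inj {s t : Multiset ℕ} (hs : ∀ x ∈ s, 0 < x) (ht : ∀ x ∈ t, 0 < x)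
    (h : Phi s = Phi t) : s = t := by
  have hd : dPart s = dPart t := by
    rw [← ePart_Phi hs, ← ePart_Phi ht, h]
  have hg : glaisher 2 (rPart s) = glaisher 2 (rPart t) := by
    rw [← oPart_Phi hs, ← oPart_Phi ht, h]
  have hr : rPart s = rPart t := glaisher_inj (rPart_nodup s) (rPart_nodup t) hg
  rw [decomp s, decomp t, hr, hd]

lemma card_split_rd (s : Multiset ℕ) :
    s.card = (rPart s).card + ((dPart s).card + (dPart s).card) := by
  conv_lhs => rw [decomp s]
  rw [Multiset.card_add, Multiset.card_add]

lemma card_split_oe (s : Multiset ℕ) :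
    s.card = (oPart s).card + (ePart s).card := by
  have h1 : (ePart s).card = (s.filter (fun x => Even x)).card := by
    rw [ePart, Multiset.card_map]
  have h2 : s.filter (fun x => Odd x) + s.filter (fun x => ¬ Odd x) = s :=
    Multiset.filter_add_not _ s
  have h3 : s.filter (fun x => ¬ Odd x) = s.filter (fun x => Even x) :=
    Multiset.filter_congr (fun x _ => by simp [Nat.not_odd_iff_even])
  rw [oPart, h1, ← h3, ← Multiset.card_add, h2]

/-- `Phi` as a map on partitions of `n`. -/
def PhiP {n : ℕ} (μ : Nat.Partition n) : Nat.Partition n where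
  parts := Phi μ.parts
  parts_pos := fun hi => pos_Phi (fun x hx => μ.parts_pos hx) _ hi
  parts_sum := by rw [sum_Phi]; exact μ.parts_sum

lemma PhiP_bij (n : ℕ) : Function.Bijective (PhiP (n := n)) := by
  rw [← Finite.injective_iff_bijective]
  intro μ ν h
  have h' : Phi μ.parts = Phi ν.parts := congrArg Nat.Partition.parts h
  have := Phi_inj (fun x hx => μ.parts_pos hx) (fun x hx => ν.parts_pos hx) h'
  cases μ; cases ν; simpa using this

/-- `Σ_{λ ∈ P(n)} (ℓ(λ^o) + ℓ(λ^e) − ℓ(λ^r)) = Σ_{λ ∈ P(n)} (ℓ((λ^r)~) − ℓ(λ^r) + ℓ(λ^e))`,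
equivalently `Σ_{λ ∈ P(n)} ℓ(λ^o) = Σ_{λ ∈ P(n)} ℓ((λ^r)~)`, and both sides equal
`Σ_{λ ∈ P(n)} 2 ℓ(λ^d)`. -/
theorem stmt18 (n : ℕ) :
    (∑ μ : Nat.Partition n,
        (((oPart μ.parts).card : ℤ) + ((ePart μ.parts).card : ℤ) - ((rPart μ.parts).card : ℤ)) =
      ∑ μ : Nat.Partition n,
        (((glaisher 2 (rPart μ.parts)).card : ℤ) - ((rPart μ.parts).card : ℤ)
          + ((ePart μ.parts).card : ℤ))) ∧
    (∑ μ : Nat.Partition n, (oPart μ.parts).card =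
      ∑ μ : Nat.Partition n, (glaisher 2 (rPart μ.parts)).card) ∧
    (∑ μ : Nat.Partition n,
        (((oPart μ.parts).card : ℤ) + ((ePart μ.parts).card : ℤ) - ((rPart μ.parts).card : ℤ)) =
      ∑ μ : Nat.Partition n, (2 * ((dPart μ.parts).card : ℤ))) := by
  have key : ∑ μ : Nat.Partition n, (oPart μ.parts).card =
      ∑ μ : Nat.Partition n, (glaisher 2 (rPart μ.parts)).card := by
    refine (Fintype.sum_bijective PhiP (PhiP_bij n)
      (fun μ => (glaisher 2 (rPart μ.parts)).card)
      (fun μ => (oPart μ.parts).card) (fun μ => ?_)).symm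
    show (glaisher 2 (rPart μ.parts)).card = (oPart (Phi μ.parts)).card
    rw [oPart_Phi (fun x hx => μ.parts_pos hx)]
  have keyZ : ∑ μ : Nat.Partition n, ((oPart μ.parts).card : ℤ) =
      ∑ μ : Nat.Partition n, ((glaisher 2 (rPart μ.parts)).card : ℤ) := by
    exact_mod_cast congrArg (fun m : ℕ => (m : ℤ)) key
  refine ⟨?_, key, ?_⟩
  · rw [Finset.sum_sub_distrib, Finset.sum_add_distrib, Finset.sum_add_distrib,
      Finset.sum_sub_distrib, keyZ]
    ring
  · refine Finset.sum_congr rfl fun μ _ => ?_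
    have h1 := card_split_oe μ.parts
    have h2 := card_split_rd μ.parts
    have h3 : ((oPart μ.parts).card : ℤ) + ((ePart μ.parts).card : ℤ) =
        (μ.parts.card : ℤ) := by exact_mod_cast h1.symm
    have h4 : ((rPart μ.parts).card : ℤ) + (((dPart μ.parts).card : ℤ)
        + ((dPart μ.parts).card : ℤ)) = (μ.parts.card : ℤ) := by exact_mod_cast h2.symm
    linarith
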